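/- A symmetric tensor A of order m and dimension n is strictly copositive if and only if no principal sub-tensor of A has a non-positive Z^{++}-eigenvalue, i.e., no principal sub-tensor B admits λ ≤ 0 and a strictly positive vector v with v^T v = 1 and B v^{m-1} = λ v. -/

import Mathlib

open Finset

/-- `A x^m` for an `m`-order `n`-dimensional tensor `A`. -/
noncomputable def tpow {m n : ℕ} (A : (Fin m → Fin n) → ℝ) (x : Fin n → ℝ) : ℝ :=
  ∑ f : Fin m → Fin n, A f * ∏ k, x (f k)

/-- `A` is symmetric: entries invariant under permutations of indices. -/
def SymT {m n : ℕ} (A : (Fin m → Fin n) → ℝ) : Prop :=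
  ∀ (σ : Equiv.Perm (Fin m)) (f : Fin m → Fin n), A (f ∘ σ) = A f

/-- `A` is copositive. -/
def CoposT {m n : ℕ} (A : (Fin m → Fin n) → ℝ) : Prop :=
  ∀ x : Fin n → ℝ, (∀ i, 0 ≤ x i) → 0 ≤ tpow A x

/-- `A` is strictly copositive. -/
def StrictCoposT {m n : ℕ} (A : (Fin m → Fin n) → ℝ) : Prop :=
  ∀ x : Fin n → ℝ, (∀ i, 0 ≤ x i) → x ≠ 0 → 0 < tpow A x

/-- `(A_S x^{m-1})_i` : the `i`-th component of the contraction of the principal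
sub-tensor of `A` on the index set `S` with `x` taken `m-1` times. -/
noncomputable def tcontr {m n : ℕ} (hm : 0 < m) (A : (Fin m → Fin n) → ℝ)
    (S : Finset (Fin n)) (x : Fin n → ℝ) (i : Fin n) : ℝ :=
  ∑ f ∈ Finset.univ.filter
      (fun f : Fin m → Fin n => f ⟨0, hm⟩ = i ∧ ∀ k, f k ∈ S),
    A f * ∏ k ∈ Finset.univ.erase (⟨0, hm⟩ : Fin m), x (f k)

noncomputable def tD {m n : ℕ} (hm : 0 < m) (A : (Fin m → Fin n) → ℝ)
    (x : Fin n → ℝ) (i : Fin n) : ℝ :=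
  ∑ f ∈ Finset.univ.filter (fun f : Fin m → Fin n => f ⟨0, hm⟩ = i),
    A f * ∏ k ∈ Finset.univ.erase (⟨0, hm⟩ : Fin m), x (f k)

lemma tpow_smul {m n : ℕ} (A : (Fin m → Fin n) → ℝ) (x : Fin n → ℝ) (c : ℝ) :
    tpow A (fun j => c * x j) = c ^ m * tpow A x := by
  unfold tpow
  rw [Finset.mul_sum]
  refine Finset.sum_congr rfl fun f _ => ?_
  rw [Finset.prod_mul_distrib, Finset.prod_const]
  simp [Finset.card_univ]
  ring

lemma tpow_continuous {m n : ℕ} (A : (Fin m → Fin n) → ℝ) : Continuous (tpow A) := by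
  unfold tpow
  exact continuous_finset_sum _ fun f _ =>
    continuous_const.mul (continuous_finset_prod _ fun k _ => continuous_apply _)

lemma tpow_split {m n : ℕ} (hm : 0 < m) (A : (Fin m → Fin n) → ℝ)
    (S : Finset (Fin n)) (x : Fin n → ℝ) (hx : ∀ j ∉ S, x j = 0) :
    tpow A x = ∑ i ∈ S, x i * tcontr hm A S x i := by
  classical
  set k0 : Fin m := ⟨0, hm⟩
  have h1 : tpow A x = ∑ f ∈ Finset.univ.filter (fun f : Fin m → Fin n => ∀ k, f k ∈ S),
      A f * ∏ k, x (f k) := by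
    refine (Finset.sum_subset (Finset.filter_subset _ _) fun f _ hf => ?_).symm
    simp only [Finset.mem_filter, Finset.mem_univ, true_and, not_forall] at hf
    obtain ⟨k, hk⟩ := hf
    rw [Finset.prod_eq_zero (Finset.mem_univ k) (hx _ hk), mul_zero]
  rw [h1, ← Finset.sum_fiberwise_of_maps_to (g := fun f : Fin m → Fin n => f k0)
      (t := S) (fun f (hf : f ∈ Finset.univ.filter (fun f : Fin m → Fin n => ∀ k, f k ∈ S)) =>
        (Finset.mem_filter.1 hf).2 k0)]
  refine Finset.sum_congr rfl fun i hi => ?_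
  have h2 : (Finset.univ.filter (fun f : Fin m → Fin n => ∀ k, f k ∈ S)).filter
      (fun f => f k0 = i) = Finset.univ.filter
      (fun f : Fin m → Fin n => f k0 = i ∧ ∀ k, f k ∈ S) := by
    rw [Finset.filter_filter]
    exact Finset.filter_congr fun f _ => and_comm
  rw [h2, tcontr, Finset.mul_sum]
  refine Finset.sum_congr rfl fun f hf => ?_
  have hf0 : f k0 = i := (Finset.mem_filter.1 hf).2.1
  rw [← Finset.mul_prod_erase Finset.univ _ (Finset.mem_univ k0), hf0]
  ring

lemma tcontr_eq_tD {m n : ℕ} (hm : 0 < m) (A : (Fin m → Fin n) → ℝ)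
    (S : Finset (Fin n)) (x : Fin n → ℝ) (hx : ∀ j ∉ S, x j = 0)
    (i : Fin n) (hi : i ∈ S) : tcontr hm A S x i = tD hm A x i := by
  classical
  set k0 : Fin m := ⟨0, hm⟩
  refine Finset.sum_subset (fun f hf => ?_) (fun f hf hf' => ?_)
  · simp only [Finset.mem_filter, Finset.mem_univ, true_and] at hf ⊢
    exact hf.1
  · simp only [Finset.mem_filter, Finset.mem_univ, true_and, not_and, not_forall] at hf hf'
    obtain ⟨k, hk⟩ := hf' hf
    have hkne : k ≠ k0 := by
      rintro rfl
      rw [hf] at hk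
      exact hk hi
    rw [Finset.prod_eq_zero (Finset.mem_erase.2 ⟨hkne, Finset.mem_univ k⟩) (hx _ hk), mul_zero]

lemma key_reindex {m n : ℕ} (hm : 0 < m) (A : (Fin m → Fin n) → ℝ) (hA : SymT A)
    (x : Fin n → ℝ) (i : Fin n) (k : Fin m) :
    ∑ f ∈ Finset.univ.filter (fun f : Fin m → Fin n => f k = i),
      A f * ∏ l ∈ Finset.univ.erase k, x (f l) = tD hm A x i := by
  classical
  set k0 : Fin m := ⟨0, hm⟩
  set σ : Equiv.Perm (Fin m) := Equiv.swap k0 k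
  have hσinj : Function.Injective (σ : Fin m → Fin m) := σ.injective
  have himg : (Finset.univ.erase k0).image (σ : Fin m → Fin m) = Finset.univ.erase k := by
    rw [Finset.image_erase hσinj, Finset.image_univ_equiv]
    simp [σ, Equiv.swap_apply_left]
  refine Finset.sum_nbij' (fun f => f ∘ σ) (fun g => g ∘ σ) ?_ ?_ ?_ ?_ ?_
  · intro f hf
    simp only [Finset.mem_filter, Finset.mem_univ, true_and] at hf ⊢
    simpa [σ, k0, Equiv.swap_apply_left] using hf
  · intro g hg
    simp only [Finset.mem_filter, Finset.mem_univ, true_and] at hg ⊢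
    simpa [σ, k0, Equiv.swap_apply_left] using hg
  · intro f _
    funext l
    simp [σ, Function.comp]
  · intro g _
    funext l
    simp [σ, Function.comp]
  · intro f hf
    rw [hA σ f]
    congr 1
    rw [← himg, Finset.prod_image (fun a _ b _ hab => hσinj hab)]
    rfl

lemma tD_deriv {m n : ℕ} (hm : 0 < m) (A : (Fin m → Fin n) → ℝ) (hA : SymT A)
    (x : Fin n → ℝ) (i : Fin n) :
    HasDerivAt (fun t => tpow A (fun j => x j + t * (if j = i then (1:ℝ) else 0)))
      ((m : ℝ) * tD hm A x i) 0 := by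
  classical
  set e : Fin n → ℝ := fun j => if j = i then (1:ℝ) else 0 with he
  have hterm : ∀ f : Fin m → Fin n,
      HasDerivAt (fun t => A f * ∏ k, (x (f k) + t * e (f k)))
        (A f * ∑ k, (∏ l ∈ Finset.univ.erase k, x (f l)) * e (f k)) 0 := by
    intro f
    have hfac : ∀ k : Fin m, HasDerivAt (fun t : ℝ => x (f k) + t * e (f k)) (e (f k)) 0 := by
      intro k
      simpa using ((hasDerivAt_id (0:ℝ)).mul_const (e (f k))).const_add (x (f k))
    have := HasDerivAt.fun_finsetProd (u := Finset.univ)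
      (f := fun k t => x (f k) + t * e (f k)) (f' := fun k => e (f k))
      (fun k _ => hfac k)
    have h2 := this.const_mul (A f)
    convert h2 using 1
    · rfl
    · rfl
    simp [smul_eq_mul, mul_comm]
  have hsum := HasDerivAt.fun_sum (u := Finset.univ)
    (A := fun f t => A f * ∏ k, (x (f k) + t * e (f k)))
    (A' := fun f => A f * ∑ k, (∏ l ∈ Finset.univ.erase k, x (f l)) * e (f k))
    (fun f _ => hterm f)
  have heq : ∑ f : Fin m → Fin n,
      A f * ∑ k, (∏ l ∈ Finset.univ.erase k, x (f l)) * e (f k)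
      = (m : ℝ) * tD hm A x i := by
    simp_rw [Finset.mul_sum]
    rw [Finset.sum_comm]
    have hk : ∀ k : Fin m, ∑ f : Fin m → Fin n,
        A f * ((∏ l ∈ Finset.univ.erase k, x (f l)) * e (f k)) = tD hm A x i := by
      intro k
      rw [← key_reindex hm A hA x i k]
      rw [Finset.sum_filter]
      refine Finset.sum_congr rfl fun f _ => ?_
      by_cases hfk : f k = i <;> simp [he, hfk]
    rw [Finset.sum_congr rfl fun k _ => hk k]
    simp [Finset.card_univ, mul_comm]
  rw [← heq]
  exact hsum

lemma sqrtpow_deriv (c : ℝ) (m : ℕ) :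
    HasDerivAt (fun t : ℝ => Real.sqrt (1 + 2*c*t + t^2) ^ m) ((m:ℝ) * c) 0 := by
  have hs : HasDerivAt (fun t : ℝ => 1 + 2*c*t + t^2) (2*c) 0 := by
    have h1 : HasDerivAt (fun t : ℝ => 2*c*t) (2*c) 0 := by
      simpa using (hasDerivAt_id (0:ℝ)).const_mul (2*c)
    have h2 : HasDerivAt (fun t : ℝ => t^2) 0 0 := by
      simpa using hasDerivAt_pow 2 (0:ℝ)
    simpa using (h1.const_add 1).fun_add h2
  have hsqrt : HasDerivAt Real.sqrt (1/(2*Real.sqrt 1)) ((fun t : ℝ => 1+2*c*t+t^2) 0) := by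
    rw [show (fun t : ℝ => 1+2*c*t+t^2) 0 = 1 by norm_num]
    exact Real.hasDerivAt_sqrt one_ne_zero
  have hcomp := hsqrt.comp 0 hs
  have hpow := hcomp.pow m
  have hval : (Real.sqrt ∘ fun t : ℝ => 1+2*c*t+t^2) 0 = 1 := by
    simp [Function.comp]
  rw [hval] at hpow
  have : (m:ℝ) * 1 ^ (m-1) * (1 / (2 * Real.sqrt 1) * (2 * c)) = (m:ℝ) * c := by
    rw [Real.sqrt_one]; ring
  rw [this] at hpow
  exact hpow

theorem stmt9 {m n : ℕ} (hm : 0 < m) (A : (Fin m → Fin n) → ℝ) (hA : SymT A) :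
    StrictCoposT A ↔
      ¬ ∃ (S : Finset (Fin n)) (lam : ℝ) (v : Fin n → ℝ),
        S.Nonempty ∧ lam ≤ 0 ∧ (∀ i ∈ S, 0 < v i) ∧ (∑ i ∈ S, v i ^ 2 = 1) ∧
        ∀ i ∈ S, tcontr hm A S v i = lam * v i := by
  classical
  constructor
  · rintro hsc ⟨S, lam, v, hSne, hlam, hv, hnorm, heig⟩
    set x : Fin n → ℝ := fun j => if j ∈ S then v j else 0 with hxdef
    have hx0 : ∀ j, 0 ≤ x j := fun j => by
      by_cases h : j ∈ S <;> simp [hxdef, h]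
      exact (hv j h).le
    have hxne : x ≠ 0 := by
      obtain ⟨i, hi⟩ := hSne
      intro h
      have h2 := congrFun h i
      simp [hxdef, hi] at h2
      exact absurd h2 (ne_of_gt (hv i hi))
    have hxoff : ∀ j ∉ S, x j = 0 := fun j hj => by simp [hxdef, hj]
    have hpos := hsc x hx0 hxne
    have hsplit := tpow_split hm A S x hxoff
    have hco : ∀ i ∈ S, tcontr hm A S x i = tcontr hm A S v i := by
      intro i hi
      unfold tcontr
      refine Finset.sum_congr rfl fun f hf => ?_
      simp only [Finset.mem_filter, Finset.mem_univ, true_and] at hf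
      congr 1
      refine Finset.prod_congr rfl fun k _ => ?_
      simp [hxdef, hf.2 k]
    have hval : tpow A x = lam := by
      rw [hsplit]
      have h3 : ∀ i ∈ S, x i * tcontr hm A S x i = lam * v i ^ 2 := by
        intro i hi
        rw [hco i hi, heig i hi]
        simp [hxdef, hi]
        ring
      rw [Finset.sum_congr rfl h3, ← Finset.mul_sum, hnorm, mul_one]
    rw [hval] at hpos
    linarith
  · intro hno
    intro x0 hx0 hx0ne
    by_contra hle
    push_neg at hle
    apply hno
    obtain ⟨i0, hi0⟩ := Function.ne_iff.1 hx0ne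
    have hsumpos : 0 < ∑ j, x0 j ^ 2 :=
      Finset.sum_pos' (fun j _ => sq_nonneg _) ⟨i0, Finset.mem_univ _, lt_of_le_of_ne (sq_nonneg _) (Ne.symm (pow_ne_zero 2 hi0))⟩
    set c0 := Real.sqrt (∑ j, x0 j ^ 2) with hc0
    have hc0pos : 0 < c0 := Real.sqrt_pos.2 hsumpos
    set K : Set (Fin n → ℝ) := {y | (∀ j, 0 ≤ y j) ∧ ∑ j, y j ^ 2 = 1} with hKdef
    have hnormK : ∀ y : Fin n → ℝ, (∀ j, 0 ≤ y j) → 0 < ∑ j, y j ^ 2 →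
        (fun j => (Real.sqrt (∑ j, y j ^ 2))⁻¹ * y j) ∈ K := by
      intro y hy hpos
      refine ⟨fun j => mul_nonneg (inv_nonneg.2 (Real.sqrt_nonneg _)) (hy j), ?_⟩
      have h4 : ∑ j, ((Real.sqrt (∑ j, y j ^ 2))⁻¹ * y j) ^ 2
          = (Real.sqrt (∑ j, y j ^ 2))⁻¹ ^ 2 * ∑ j, y j ^ 2 := by
        rw [Finset.mul_sum]
        exact Finset.sum_congr rfl fun j _ => by ring
      rw [h4, inv_pow, Real.sq_sqrt hpos.le, inv_mul_cancel₀ hpos.ne']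
    have hz0K : (fun j => c0⁻¹ * x0 j) ∈ K := hnormK x0 hx0 hsumpos
    have hKcomp : IsCompact K := by
      apply Metric.isCompact_of_isClosed_isBounded
      · have hKeq : K = (⋂ j, {y : Fin n → ℝ | 0 ≤ y j}) ∩ {y | ∑ j, y j ^ 2 = 1} := by
          ext y
          simp [hKdef, Set.mem_iInter]
        rw [hKeq]
        exact IsClosed.inter
          (isClosed_iInter fun j => isClosed_le continuous_const (continuous_apply j))
          (isClosed_eq (continuous_finset_sum _ fun j _ => (continuous_apply j).pow 2)
            continuous_const)
      · rw [isBounded_iff_forall_norm_le]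
        refine ⟨1, fun y hy => ?_⟩
        rw [pi_norm_le_iff_of_nonneg zero_le_one]
        intro j
        rw [Real.norm_eq_abs]
        have h6 : y j ^ 2 ≤ 1 := by
          rw [← hy.2]
          exact Finset.single_le_sum (f := fun j => y j ^ 2) (fun j _ => sq_nonneg _)
            (Finset.mem_univ j)
        exact (sq_le_one_iff_abs_le_one _).1 h6
    obtain ⟨x, hxK, hminOn⟩ := hKcomp.exists_isMinOn ⟨_, hz0K⟩ (tpow_continuous A).continuousOn
    set lam := tpow A x with hlamdef
    have hminle : ∀ z ∈ K, lam ≤ tpow A z := fun z hz => hminOn hz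
    have hlam0 : lam ≤ 0 := by
      have h1 := hminle _ hz0K
      have h2 : tpow A (fun j => c0⁻¹ * x0 j) = c0⁻¹ ^ m * tpow A x0 := tpow_smul A x0 c0⁻¹
      have h3 : c0⁻¹ ^ m * tpow A x0 ≤ 0 :=
        mul_nonpos_of_nonneg_of_nonpos (by positivity) hle
      rw [h2] at h1
      linarith
    set S := Finset.univ.filter (fun i => 0 < x i) with hSdef
    have hxnn : ∀ j, 0 ≤ x j := hxK.1
    have hxoff : ∀ j ∉ S, x j = 0 := by
      intro j hj
      simp only [hSdef, Finset.mem_filter, Finset.mem_univ, true_and, not_lt] at hj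
      exact le_antisymm hj (hxnn j)
    have hSne : S.Nonempty := by
      by_contra h
      rw [Finset.not_nonempty_iff_eq_empty] at h
      have h5 : ∑ j, x j ^ 2 = 0 := Finset.sum_eq_zero fun j _ => by
        rw [hxoff j (by simp [h]), zero_pow two_ne_zero]
      rw [hxK.2] at h5
      norm_num at h5
    -- lower bound
    have hlower : ∀ y : Fin n → ℝ, (∀ j, 0 ≤ y j) → 0 < ∑ j, y j ^ 2 →
        lam * Real.sqrt (∑ j, y j ^ 2) ^ m ≤ tpow A y := by
      intro y hy hposy
      set c := Real.sqrt (∑ j, y j ^ 2) with hc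
      have hcpos : 0 < c := Real.sqrt_pos.2 hposy
      have h1 := hminle _ (hnormK y hy hposy)
      have h2 : tpow A (fun j => c⁻¹ * y j) = c⁻¹ ^ m * tpow A y := tpow_smul A y c⁻¹
      rw [h2] at h1
      have hcm : (0:ℝ) < c ^ m := pow_pos hcpos m
      have h3 := mul_le_mul_of_nonneg_right h1 hcm.le
      calc lam * c ^ m ≤ c⁻¹ ^ m * tpow A y * c ^ m := h3
        _ = tpow A y := by rw [inv_pow, mul_comm, ← mul_assoc, mul_inv_cancel₀ hcm.ne', one_mul]
    have heig : ∀ i ∈ S, tcontr hm A S x i = lam * x i := by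
      intro i hi
      have hxi : 0 < x i := (Finset.mem_filter.1 hi).2
      set e : Fin n → ℝ := fun j => if j = i then (1:ℝ) else 0 with he
      set g : ℝ → ℝ := fun t => tpow A (fun j => x j + t * e j) with hg
      set h : ℝ → ℝ := fun t => Real.sqrt (1 + 2*(x i)*t + t^2) ^ m with hh
      have hgd : HasDerivAt g ((m:ℝ) * tD hm A x i) 0 := tD_deriv hm A hA x i
      have hhd : HasDerivAt h ((m:ℝ) * x i) 0 := sqrtpow_deriv (x i) m
      have hFd : HasDerivAt (fun t => g t - lam * h t)
          ((m:ℝ) * tD hm A x i - lam * ((m:ℝ) * x i)) 0 := hgd.sub (hhd.const_mul lam)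
      have hG : ∀ t : ℝ, |t| < x i → lam * h t ≤ g t := by
        intro t ht
        obtain ⟨ht1, ht2⟩ := abs_lt.1 ht
        set y : Fin n → ℝ := fun j => x j + t * e j with hy
        have hynn : ∀ j, 0 ≤ y j := by
          intro j
          by_cases hj : j = i
          · subst hj; simp [hy, he]; linarith
          · simp [hy, he, hj]; exact hxnn j
        have hyi : 0 < y i := by simp [hy, he]; linarith
        have hsum : ∑ j, y j ^ 2 = 1 + 2*(x i)*t + t^2 := by
          have expand : ∀ j, y j ^ 2 = x j ^ 2 + 2*t*(if j = i then x j else 0)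
              + t^2 * (if j = i then (1:ℝ) else 0) := by
            intro j
            by_cases hj : j = i <;> simp [hy, he, hj] <;> ring
          rw [Finset.sum_congr rfl fun j _ => expand j]
          rw [Finset.sum_add_distrib, Finset.sum_add_distrib, hxK.2,
            ← Finset.mul_sum, ← Finset.mul_sum]
          simp [Finset.sum_ite_eq' Finset.univ i]
          ring
        have hposy : 0 < ∑ j, y j ^ 2 := by
          have h6 : y i ^ 2 ≤ ∑ j, y j ^ 2 :=
            Finset.single_le_sum (f := fun j => y j ^ 2) (fun j _ => sq_nonneg _)
              (Finset.mem_univ i)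
          nlinarith
        have h7 := hlower y hynn hposy
        rw [hsum] at h7
        exact h7
      have hF0 : g 0 - lam * h 0 = 0 := by
        have hg0 : g 0 = lam := by
          simp only [hg, zero_mul, add_zero]
          rfl
        have hh0 : h 0 = 1 := by
          simp [hh]
        rw [hg0, hh0]
        ring
      have hlocal : IsLocalMin (fun t => g t - lam * h t) 0 := by
        have hmem : Set.Ioo (-(x i)) (x i) ∈ nhds (0:ℝ) := Ioo_mem_nhds (by linarith) hxi
        filter_upwards [hmem] with t ht
        have h8 := hG t (abs_lt.2 ⟨ht.1, ht.2⟩)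
        simp only [hF0]
        linarith
      have hz := hlocal.hasDerivAt_eq_zero hFd
      have hm' : (m:ℝ) ≠ 0 := Nat.cast_ne_zero.2 hm.ne'
      have htD : tD hm A x i = lam * x i := by
        have h9 : (m:ℝ) * (tD hm A x i - lam * x i) = 0 := by linarith [hz]
        have := mul_eq_zero.1 h9
        rcases this with h | h
        · exact absurd h hm'
        · linarith
      rw [tcontr_eq_tD hm A S x hxoff i hi]
      exact htD
    have hnormS : ∑ i ∈ S, x i ^ 2 = 1 := by
      rw [← hxK.2]
      exact Finset.sum_subset (Finset.subset_univ S) fun j _ hj => by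
        rw [hxoff j hj, zero_pow two_ne_zero]
    exact ⟨S, lam, x, hSne, hlam0, fun i hi => (Finset.mem_filter.1 hi).2, hnormS, heig⟩
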